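/- Let Λ be an artin algebra, let X and Y be finite-length Λ-modules, and let M be a submodule of X ⊕ Y. Then there exist a submodule X' of X and a submodule Y' of Y such that M degenerates to X' ⊕ Y'. Explicitly, if i : M → X ⊕ Y is the inclusion and p : X ⊕ Y → X the projection onto the first summand, then M degenerates to (im p∘i) ⊕ (ker p∘i). -/

import Mathlib

universe u v

/-- `M` degenerates to `N`: there exists a finite-length `Λ`-module `X` and a short exact
sequence `0 → X → M ⊕ X → N → 0` of `Λ`-modules (a Riedtmann-sequence). -/
def Degenerates (Λ : Type u) [Ring Λ] (M N : Type v) [AddCommGroup M] [Module Λ M]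
    [AddCommGroup N] [Module Λ N] : Prop :=
  ∃ (X : Type v) (_ : AddCommGroup X) (_ : Module Λ X), IsFiniteLength Λ X ∧
    ∃ (f : X →ₗ[Λ] M × X) (g : M × X →ₗ[Λ] N),
      Function.Injective f ∧ Function.Surjective g ∧ LinearMap.range f = LinearMap.ker g

/-- Transport a degeneration along a linear equivalence of the target. -/
lemma Degenerates.congr_right {Λ : Type u} [Ring Λ] {M N N' : Type v}
    [AddCommGroup M] [Module Λ M] [AddCommGroup N] [Module Λ N]
    [AddCommGroup N'] [Module Λ N'] (e : N ≃ₗ[Λ] N')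
    (h : Degenerates Λ M N) : Degenerates Λ M N' := by
  obtain ⟨Z, _, _, hZ, f, g, hf, hg, hfg⟩ := h
  refine ⟨Z, ‹_›, ‹_›, hZ, f, e.toLinearMap.comp g, hf, e.surjective.comp hg, ?_⟩
  rw [hfg]
  ext x
  simp [LinearMap.mem_ker, e.map_eq_zero_iff]

/-- If `q : M → B` is a surjective linear map with finite-length kernel,
then `M` degenerates to `B × ker q`. -/
lemma degenerates_of_surjective {Λ : Type u} [Ring Λ] {M B : Type v}
    [AddCommGroup M] [Module Λ M] [AddCommGroup B] [Module Λ B]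
    (q : M →ₗ[Λ] B) (hq : Function.Surjective q)
    (hK : IsFiniteLength Λ (LinearMap.ker q)) :
    Degenerates Λ M (B × ↥(LinearMap.ker q)) := by
  refine ⟨↥(LinearMap.ker q), inferInstance, inferInstance, hK,
    LinearMap.prod (LinearMap.ker q).subtype 0,
    q.prodMap LinearMap.id, ?_, hq.prodMap Function.surjective_id, ?_⟩
  · intro a b hab
    exact Subtype.ext (congrArg Prod.fst hab)
  · ext ⟨m, a⟩
    constructor
    · rintro ⟨x, hx⟩
      obtain ⟨h1, h2⟩ := Prod.mk.injEq .. ▸ hx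
      simp only [LinearMap.mem_ker, LinearMap.prodMap_apply, LinearMap.id_apply, Prod.mk.injEq]
      exact Prod.ext_iff.mpr ⟨by simp [← h1, x.2], by simp [← h2]⟩
    · rintro h
      simp only [LinearMap.mem_ker, LinearMap.prodMap_apply, LinearMap.id_apply,
        Prod.mk.injEq, Prod.ext_iff] at h
      exact ⟨⟨m, h.1⟩, by simp [Prod.ext_iff, Subtype.ext_iff, h.2]⟩

/-- if `M` is a submodule of `X ⊕ Y`, then `M` degenerates to `X' ⊕ Y'` for some
submodules `X' ⊆ X`, `Y' ⊆ Y`; explicitly, with `i : M → X ⊕ Y` the inclusion and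
`p : X ⊕ Y → X` the first projection, `M` degenerates to `(im p∘i) ⊕ (ker p∘i)`. -/
theorem degenerates_submodule_of_prod
    (k : Type u) [CommRing k] [IsArtinianRing k]
    (Λ : Type u) [Ring Λ] [Algebra k Λ] [Module.Finite k Λ]
    (X Y : Type v) [AddCommGroup X] [Module Λ X] [AddCommGroup Y] [Module Λ Y]
    (hX : IsFiniteLength Λ X) (hY : IsFiniteLength Λ Y)
    (M : Submodule Λ (X × Y)) :
    (∃ (X' : Submodule Λ X) (Y' : Submodule Λ Y), Degenerates Λ M (X' × Y')) ∧
    Degenerates Λ M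
      (↥(LinearMap.range ((LinearMap.fst Λ X Y).comp M.subtype)) ×
       ↥(LinearMap.ker ((LinearMap.fst Λ X Y).comp M.subtype))) := by
  set p := (LinearMap.fst Λ X Y).comp M.subtype with hp
  -- finite length of X × Y, hence of M, hence of ker p
  rw [isFiniteLength_iff_isNoetherian_isArtinian] at hX hY
  obtain ⟨hXn, hXa⟩ := hX
  obtain ⟨hYn, hYa⟩ := hY
  have hXY : IsNoetherian Λ (X × Y) := inferInstance
  have hXYa : IsArtinian Λ (X × Y) := inferInstance
  have hMn : IsNoetherian Λ M := inferInstance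
  have hMa : IsArtinian Λ M := inferInstance
  have hK : IsFiniteLength Λ (LinearMap.ker p) :=
    isFiniteLength_iff_isNoetherian_isArtinian.mpr ⟨inferInstance, inferInstance⟩
  -- the degeneration to (range p) × (ker p)
  have key : Degenerates Λ M (↥(LinearMap.range p) × ↥(LinearMap.ker p)) := by
    have := degenerates_of_surjective p.rangeRestrict p.surjective_rangeRestrict
      (by rw [LinearMap.ker_rangeRestrict]; exact hK)
    rw [LinearMap.ker_rangeRestrict] at this
    exact this
  refine ⟨?_, key⟩
  -- ker p is isomorphic to a submodule of Y
  refine ⟨LinearMap.range p, M.comap (LinearMap.inr Λ X Y), ?_⟩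
  have e : ↥(LinearMap.ker p) ≃ₗ[Λ] ↥(M.comap (LinearMap.inr Λ X Y)) :=
    { toFun := fun a => ⟨(a.1.1).2, by
        have h0 : (a.1.1).1 = 0 := a.2
        have : ((0 : X), (a.1.1).2) = a.1.1 := by
          rw [← h0]
        simpa [Submodule.mem_comap, this] using a.1.2⟩
      map_add' := fun a b => rfl
      map_smul' := fun c a => rfl
      invFun := fun y => ⟨⟨((0 : X), y.1), y.2⟩, by
        simp [LinearMap.mem_ker, hp]⟩
      left_inv := fun a => by
        have h0 : (a.1.1).1 = 0 := a.2
        ext <;> simp [h0.symm]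
      right_inv := fun y => rfl }
  exact key.congr_right ((LinearEquiv.refl Λ _).prodCongr e)
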